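/- If d ∈ ℳ and ρ ∈ ℳ_ℤ is a Katetov extension of d, then the metric completion of (ℤ, ρ) is isometrically isomorphic to the Urysohn space (𝕌, δ); that is, the completion is a universal and ultrahomogeneous Polish metric space. -/

import Mathlib

open TopologicalSpace

/-- Borel reducibility of equivalence relations on (standard) Borel spaces. -/
def BorelReducible {X : Type*} {Y : Type*} [MeasurableSpace X] [MeasurableSpace Y]
    (E : X → X → Prop) (F : Y → Y → Prop) : Prop :=
  ∃ θ : X → Y, Measurable θ ∧ ∀ x₁ x₂, E x₁ x₂ ↔ F (θ x₁) (θ x₂)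

/-- A Borel action of a Polish group on a standard Borel space. -/
structure PolishGroupAction where
  G : Type
  [grp : Group G]
  [top : TopologicalSpace G]
  [tgrp : IsTopologicalGroup G]
  [pol : PolishSpace G]
  [mG : MeasurableSpace G]
  [bG : BorelSpace G]
  Y : Type
  [mY : MeasurableSpace Y]
  [sbY : StandardBorelSpace Y]
  smul : G → Y → Y
  one_smul : ∀ y, smul 1 y = y
  mul_smul : ∀ g h y, smul (g * h) y = smul g (smul h y)
  measurable_smul : Measurable fun p : G × Y => smul p.1 p.2

attribute [instance] PolishGroupAction.grp PolishGroupAction.top PolishGroupAction.tgrp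
  PolishGroupAction.pol PolishGroupAction.mG PolishGroupAction.bG PolishGroupAction.mY
  PolishGroupAction.sbY

/-- The orbit equivalence relation of a Polish group action. -/
def PolishGroupAction.orbitRel (A : PolishGroupAction) : A.Y → A.Y → Prop :=
  fun y₁ y₂ => ∃ g : A.G, A.smul g y₁ = y₂

/-- An equivalence relation is below a group action if it is Borel reducible to the orbit
equivalence relation of a Borel action of a Polish group on a standard Borel space. -/
def BelowGroupAction {X : Type*} [MeasurableSpace X] (E : X → X → Prop) : Prop :=
  ∃ A : PolishGroupAction, BorelReducible E A.orbitRel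

/-- `U` is (a copy of) the Urysohn metric space: a complete separable metric space which is
universal for separable metric spaces and ultrahomogeneous. -/
def IsUrysohn (U : Type) [MetricSpace U] : Prop :=
  CompleteSpace U ∧ SeparableSpace U ∧
  (∀ (X : Type) [MetricSpace X], SeparableSpace X → ∃ f : X → U, Isometry f) ∧
  (∀ s : Set U, s.Finite → ∀ f : s → U,
      (∀ a b : s, dist (f a) (f b) = dist (a : U) (b : U)) →
      ∃ g : U ≃ᵢ U, ∀ a : s, g (a : U) = f a)

/-- The Effros Borel structure (on the collection of all subsets; its restriction to the closed
subsets is the usual Effros Borel space `F(Z)`). -/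
def effros (Z : Type*) [TopologicalSpace Z] : MeasurableSpace (Set Z) :=
  MeasurableSpace.generateFrom
    {S | ∃ V : Set Z, IsOpen V ∧ S = {F : Set Z | (F ∩ V).Nonempty}}
/-- The set `ℳ_A` of all metrics on `A`, viewed as a subset of `ℝ^{A×A}`. -/
def MetricsOn (A : Type) : Set ((A × A) → ℝ) :=
  {d | (∀ a b, 0 ≤ d (a, b)) ∧ (∀ a b, d (a, b) = 0 ↔ a = b) ∧
       (∀ a b, d (a, b) = d (b, a)) ∧ ∀ a b c, d (a, c) ≤ d (a, b) + d (b, c)}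
/-- `ρ` (a metric on `ℤ`) is a Katetov extension of `d` (a metric on `ℕ`): `ρ` extends `d`,
and for every finite nonempty `A ⊆ ℤ`, every `ε > 0` and every metric `d̃` on `A ∪ {*}`
(determined by the function `r x = d̃(x,*)`) which extends `ρ` on `A × A` and takes positive
rational values `d̃(x,*)`, there is `i ∈ ℤ ∖ A` with `|ρ(i,x) − d̃(*,x)| < ε` for all
`x ∈ A`. -/
def IsKatetovExt (d : (ℕ × ℕ) → ℝ) (ρ : (ℤ × ℤ) → ℝ) : Prop :=
  (∀ n m : ℕ, ρ ((n : ℤ), (m : ℤ)) = d (n, m)) ∧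
  ∀ A : Finset ℤ, A.Nonempty → ∀ ε : ℝ, 0 < ε → ∀ r : ℤ → ℝ,
    (∀ x ∈ A, ∃ q : ℚ, 0 < q ∧ r x = (q : ℝ)) →
    (∀ x ∈ A, ∀ y ∈ A, |r x - r y| ≤ ρ (x, y) ∧ ρ (x, y) ≤ r x + r y) →
    ∃ i : ℤ, i ∉ A ∧ ∀ x ∈ A, |ρ (i, x) - r x| < ε

namespace UryAux

noncomputable def optD {U : Type} [MetricSpace U] (S : Set U) (h : U → ℝ) :
    Option ↥S → Option ↥S → ℝ
  | none, none => 0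
  | some a, none => h a
  | none, some b => h b
  | some a, some b => dist (a : U) (b : U)

theorem urysohn_one_point {U : Type} [MetricSpace U] (hU : IsUrysohn U)
    (S : Set U) (hS : S.Finite) (h : U → ℝ)
    (hpos : ∀ a ∈ S, 0 < h a)
    (hk1 : ∀ a ∈ S, ∀ b ∈ S, |h a - h b| ≤ dist a b)
    (hk2 : ∀ a ∈ S, ∀ b ∈ S, dist a b ≤ h a + h b) :
    ∃ p : U, ∀ a ∈ S, dist p a = h a := by
  classical
  haveI := hS.to_subtype
  haveI : Fintype ↥S := Fintype.ofFinite _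
  set X := Option ↥S with hX
  haveI : Fintype X := instFintypeOption
  set D : X → X → ℝ := optD S h with hD
  have habs : ∀ a b : ↥S, h (a : U) - h (b : U) ≤ dist (a : U) (b : U) := by
    intro a b
    have := abs_le.1 (hk1 a a.2 b b.2)
    linarith [this.2]
  have hDself : ∀ x : X, D x x = 0 := by rintro (_|a) <;> simp [hD, optD]
  have hDcomm : ∀ x y : X, D x y = D y x := by
    rintro (_|a) (_|b) <;> simp [hD, optD, dist_comm]
  have hDtri : ∀ x y z : X, D x z ≤ D x y + D y z := by
    rintro (_|a) (_|b) (_|c) <;> simp only [hD, optD]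
    · norm_num
    · linarith [hpos c c.2]
    · linarith [hpos b b.2]
    · have := habs c b; rw [dist_comm (c:U) (b:U)] at this; linarith
    · linarith [hpos a a.2]
    · exact hk2 a a.2 c c.2
    · linarith [habs a b]
    · exact dist_triangle _ _ _
  have hDpos : ∀ x y : X, x ≠ y → 0 < D x y := by
    rintro (_|a) (_|b) hne <;> simp only [hD, optD]
    · exact absurd rfl hne
    · exact hpos b b.2
    · exact hpos a a.2
    · refine dist_pos.2 (fun hc => hne ?_)
      congr 1
      exact Subtype.coe_injective hc
  have hDzero : ∀ x y : X, D x y = 0 → x = y := by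
    intro x y h0
    by_contra hne
    exact absurd h0 (ne_of_gt (hDpos x y hne))
  letI : TopologicalSpace X := ⊥
  haveI : DiscreteTopology X := ⟨rfl⟩
  have Hopen : ∀ s : Set X, IsOpen s ↔ ∀ x ∈ s, ∃ ε > 0, ∀ y, D x y < ε → y ∈ s := by
    intro s
    constructor
    · intro _ x hx
      rcases (Finset.univ.filter (fun y : X => y ≠ x)).eq_empty_or_nonempty with he | hne
      · refine ⟨1, one_pos, fun y _ => ?_⟩
        have : y = x := by
          by_contra hy
          have : y ∈ Finset.univ.filter (fun y : X => y ≠ x) := by simp [hy]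
          simp [he] at this
        exact this ▸ hx
      · refine ⟨(Finset.univ.filter (fun y : X => y ≠ x)).inf' hne (fun y => D x y), ?_, ?_⟩
        · apply (Finset.lt_inf'_iff _).2
          intro y hy
          exact hDpos x y (by simp at hy; exact fun hq => hy hq.symm)
        · intro y hy
          have : y = x := by
            by_contra hdy
            have hym : y ∈ Finset.univ.filter (fun y : X => y ≠ x) := by simp [hdy]
            have := Finset.inf'_le (fun y => D x y) hym
            linarith
          exact this ▸ hx
    · intro _; exact isOpen_discrete s
  letI mX : MetricSpace X := MetricSpace.ofDistTopology D hDself hDcomm hDtri Hopen hDzero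
  haveI : SeparableSpace X := ⟨⟨Set.univ, Set.countable_univ, dense_univ⟩⟩
  obtain ⟨f, hf⟩ := hU.2.2.1 X inferInstance
  have hfd : ∀ x y : X, dist (f x) (f y) = D x y := fun x y => hf.dist_eq x y
  have hfi : Function.Injective f := hf.injective
  set s' : Set U := f '' (Option.some '' Set.univ) with hs'
  have hs'fin : s'.Finite := ((Set.finite_univ).image _).image _
  have hmem : ∀ a : ↥S, f (some a) ∈ s' := fun a => ⟨some a, ⟨a, trivial, rfl⟩, rfl⟩
  have hex : ∀ x : ↥s', ∃ a : ↥S, f (some a) = (x : U) := by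
    rintro ⟨x, y, ⟨a, -, rfl⟩, rfl⟩
    exact ⟨a, rfl⟩
  choose idx hidx using hex
  have hFdist : ∀ x y : ↥s', dist ((idx x : ↥S) : U) ((idx y : ↥S) : U) = dist (x : U) (y : U) := by
    intro x y
    rw [← hidx x, ← hidx y, hfd]
    rfl
  obtain ⟨g, hg⟩ := hU.2.2.2 s' hs'fin (fun x => ((idx x : ↥S) : U)) hFdist
  refine ⟨g (f none), fun a ha => ?_⟩
  set a' : ↥S := ⟨a, ha⟩ with ha'
  have he : f (some a') ∈ s' := hmem a'
  have hga : g (f (some a')) = a := by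
    have h1 := hg ⟨f (some a'), he⟩
    rw [h1]
    have h2 : some (idx ⟨f (some a'), he⟩) = some a' := hfi (hidx ⟨f (some a'), he⟩)
    have h3 : idx ⟨f (some a'), he⟩ = a' := Option.some_injective _ h2
    rw [h3]
  calc dist (g (f none)) a = dist (g (f none)) (g (f (some a'))) := by rw [hga]
    _ = dist (f none) (f (some a')) := g.dist_eq _ _
    _ = D none (some a') := hfd _ _
    _ = h a := rfl

variable {ρ : (ℤ × ℤ) → ℝ}

theorem rho_self (hρ : ρ ∈ MetricsOn ℤ) (a : ℤ) : ρ (a, a) = 0 := (hρ.2.1 a a).2 rfl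

theorem rho_pos (hρ : ρ ∈ MetricsOn ℤ) {a b : ℤ} (hab : a ≠ b) : 0 < ρ (a, b) :=
  lt_of_le_of_ne (hρ.1 a b) (fun h0 => hab ((hρ.2.1 a b).1 h0.symm))

theorem rho_abs (hρ : ρ ∈ MetricsOn ℤ) (i a b : ℤ) : |ρ (i, a) - ρ (i, b)| ≤ ρ (a, b) := by
  obtain ⟨hnn, heq, hsym, htri⟩ := hρ
  rw [abs_sub_le_iff]
  refine ⟨?_, ?_⟩
  · have h1 := htri i b a
    have h2 := hsym b a
    linarith
  · have h1 := htri i a b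
    linarith

theorem rho_sum (hρ : ρ ∈ MetricsOn ℤ) (i a b : ℤ) : ρ (a, b) ≤ ρ (i, a) + ρ (i, b) := by
  obtain ⟨hnn, heq, hsym, htri⟩ := hρ
  have h1 := htri a i b
  have h2 := hsym a i
  linarith

theorem rational_approx (hρ : ρ ∈ MetricsOn ℤ) (D : Finset ℤ) (hD : D.Nonempty)
    (s : ℤ → ℝ) (hs0 : ∀ a ∈ D, 0 ≤ s a)
    (h1 : ∀ a ∈ D, ∀ b ∈ D, |s a - s b| ≤ ρ (a, b))
    (h2 : ∀ a ∈ D, ∀ b ∈ D, ρ (a, b) ≤ s a + s b)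
    (ε : ℝ) (hε : 0 < ε) :
    ∃ q : ℤ → ℝ, (∀ a ∈ D, ∃ p : ℚ, 0 < p ∧ q a = (p : ℝ)) ∧
      (∀ a ∈ D, ∀ b ∈ D, |q a - q b| ≤ ρ (a, b) ∧ ρ (a, b) ≤ q a + q b) ∧
      (∀ a ∈ D, s a + ε / 8 ≤ q a ∧ q a ≤ s a + ε) := by
  classical
  obtain ⟨M, hM⟩ : ∃ M, M = D.sup' hD s := ⟨_, rfl⟩
  have hMle : ∀ a ∈ D, s a ≤ M := fun a ha => hM ▸ Finset.le_sup' s ha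
  have hM0 : 0 ≤ M := by
    obtain ⟨a₀, ha₀⟩ := hD
    exact le_trans (hs0 a₀ ha₀) (hMle a₀ ha₀)
  obtain ⟨c, hc⟩ : ∃ c : ℝ, c = ε / 4 := ⟨_, rfl⟩
  have hcpos : 0 < c := by rw [hc]; positivity
  obtain ⟨θ, hθ⟩ : ∃ θ : ℝ, θ = min (1/2) (c / (2 * (M + 1))) := ⟨_, rfl⟩
  have hθpos : 0 < θ := by
    rw [hθ]
    apply lt_min (by norm_num)
    positivity
  have hθhalf : θ ≤ 1/2 := hθ ▸ min_le_left _ _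
  have hθle : θ ≤ c / (2 * (M + 1)) := hθ ▸ min_le_right _ _
  have hθs : ∀ a ∈ D, θ * s a ≤ c / 2 := by
    intro a ha
    have hA : θ * s a ≤ (c / (2 * (M + 1))) * (M + 1) := by
      apply mul_le_mul hθle (by linarith [hMle a ha]) (hs0 a ha) (by positivity)
    have hB : (c / (2 * (M + 1))) * (M + 1) = c / 2 := by
      field_simp
    linarith
  obtain ⟨r₀, hr₀⟩ : ∃ r₀ : ℤ → ℝ, r₀ = fun a => (1 - θ) * s a + c := ⟨_, rfl⟩
  have hr₀a : ∀ a, r₀ a = (1 - θ) * s a + c := fun a => by rw [hr₀]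
  have hr₀lb : ∀ a ∈ D, s a + c / 2 ≤ r₀ a := by
    intro a ha
    have := hθs a ha
    rw [hr₀a a]
    nlinarith
  have hr₀ub : ∀ a ∈ D, r₀ a ≤ s a + c := by
    intro a ha
    have h0 := hs0 a ha
    rw [hr₀a a]
    nlinarith [hθpos.le]
  obtain ⟨P, hP⟩ : ∃ P : Finset (ℤ × ℤ), P = (D ×ˢ D).filter (fun p => p.1 ≠ p.2) := ⟨_, rfl⟩
  obtain ⟨mρ, hmρ⟩ : ∃ mρ : ℝ, mρ = if hPn : P.Nonempty then P.inf' hPn (fun p => ρ p) else 1 :=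
    ⟨_, rfl⟩
  have hmρpos : 0 < mρ := by
    rw [hmρ]
    split_ifs with hPn
    · apply (Finset.lt_inf'_iff _).2
      intro p hp
      rw [hP, Finset.mem_filter] at hp
      exact rho_pos hρ (by simpa using hp.2)
    · norm_num
  have hmρle : ∀ a ∈ D, ∀ b ∈ D, a ≠ b → mρ ≤ ρ (a, b) := by
    intro a ha b hb hab
    have hmem : (a, b) ∈ P := by
      rw [hP, Finset.mem_filter]
      exact ⟨Finset.mem_product.2 ⟨ha, hb⟩, hab⟩
    rw [hmρ, dif_pos ⟨(a, b), hmem⟩]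
    exact Finset.inf'_le _ hmem
  obtain ⟨η, hη⟩ : ∃ η : ℝ, η = min (c / 2) (θ * mρ) := ⟨_, rfl⟩
  have hηpos : 0 < η := by rw [hη]; exact lt_min (by positivity) (by positivity)
  have hηc : η ≤ c / 2 := hη ▸ min_le_left _ _
  have hηθ : η ≤ θ * mρ := hη ▸ min_le_right _ _
  have hrat : ∀ a : ℤ, ∃ p : ℚ, r₀ a < (p : ℝ) ∧ (p : ℝ) < r₀ a + η :=
    fun a => exists_rat_btwn (by linarith)
  choose qq hqq1 hqq2 using hrat
  refine ⟨fun a => ((qq a : ℚ) : ℝ), ?_, ?_, ?_⟩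
  · intro a ha
    refine ⟨qq a, ?_, rfl⟩
    have hpos : (0 : ℝ) < (qq a : ℝ) := by
      linarith [hr₀lb a ha, hs0 a ha, hqq1 a]
    exact_mod_cast hpos
  · intro a ha b hb
    constructor
    · rcases eq_or_ne a b with rfl | hab
      · simp [rho_self hρ]
      · have key : |r₀ a - r₀ b| ≤ ρ (a, b) - θ * mρ := by
          have e : r₀ a - r₀ b = (1 - θ) * (s a - s b) := by rw [hr₀a, hr₀a]; ring
          rw [e, abs_mul, abs_of_nonneg (show (0:ℝ) ≤ 1 - θ by linarith)]
          have t1 : (1 - θ) * |s a - s b| ≤ (1 - θ) * ρ (a, b) :=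
            mul_le_mul_of_nonneg_left (h1 a ha b hb) (by linarith)
          have t2 : θ * mρ ≤ θ * ρ (a, b) :=
            mul_le_mul_of_nonneg_left (hmρle a ha b hb hab) hθpos.le
          linarith
        have hkey := abs_le.1 key
        rw [abs_sub_le_iff]
        constructor <;> linarith [hqq1 a, hqq2 a, hqq1 b, hqq2 b, hkey.1, hkey.2]
    · have hra := hr₀lb a ha
      have hrb := hr₀lb b hb
      have := h2 a ha b hb
      linarith [hqq1 a, hqq1 b]
  · intro a ha
    have hlb := hr₀lb a ha
    have hub := hr₀ub a ha
    constructor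
    · linarith [hqq1 a, hc]
    · linarith [hqq2 a, hηc, hc]

def GoodMap {U : Type} [MetricSpace U] (ρ : (ℤ × ℤ) → ℝ) (D : Finset ℤ) (φ : ℤ → U) : Prop :=
  ∀ a ∈ D, ∀ b ∈ D, dist (φ a) (φ b) = ρ (a, b)

theorem goodMap_inj {U : Type} [MetricSpace U] (hρ : ρ ∈ MetricsOn ℤ) {D : Finset ℤ}
    {φ : ℤ → U} (hG : GoodMap ρ D φ) :
    ∀ a ∈ D, ∀ b ∈ D, φ a = φ b → a = b := by
  intro a ha b hb he
  apply (hρ.2.1 a b).1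
  rw [← hG a ha b hb, he, dist_self]

theorem extend_point {U : Type} [MetricSpace U] (hU : IsUrysohn U)
    (hρ : ρ ∈ MetricsOn ℤ) {D : Finset ℤ} {φ : ℤ → U} (hG : GoodMap ρ D φ) (i : ℤ) :
    ∃ φ' : ℤ → U, (∀ a ∈ D, φ' a = φ a) ∧ GoodMap ρ (insert i D) φ' := by
  classical
  by_cases hiD : i ∈ D
  · exact ⟨φ, fun _ _ => rfl, by rwa [Finset.insert_eq_self.2 hiD]⟩
  set S : Set U := φ '' (↑D : Set ℤ) with hS
  have hSfin : S.Finite := (D.finite_toSet).image φ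
  set h : U → ℝ := fun v => if hv : ∃ a, a ∈ D ∧ φ a = v then ρ (i, hv.choose) else 1 with hh
  have hmemS : ∀ a ∈ D, φ a ∈ S := fun a ha => Set.mem_image_of_mem φ (Finset.mem_coe.2 ha)
  have hSdata : ∀ v ∈ S, ∃ a, a ∈ D ∧ φ a = v := by
    rintro v ⟨a, ha, rfl⟩
    exact ⟨a, Finset.mem_coe.1 ha, rfl⟩
  have hval : ∀ a ∈ D, h (φ a) = ρ (i, a) := by
    intro a ha
    have hex : ∃ a', a' ∈ D ∧ φ a' = φ a := ⟨a, ha, rfl⟩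
    rw [hh]
    simp only [dif_pos hex]
    have hsp := hex.choose_spec
    rw [goodMap_inj hρ hG _ hsp.1 _ ha hsp.2]
  have hSval : ∀ v ∈ S, ∃ a, a ∈ D ∧ φ a = v ∧ h v = ρ (i, a) := by
    intro v hv
    obtain ⟨a, ha, rfl⟩ := hSdata v hv
    exact ⟨a, ha, rfl, hval a ha⟩
  have hpos : ∀ v ∈ S, 0 < h v := by
    intro v hv
    obtain ⟨a, ha, rfl, he⟩ := hSval v hv
    rw [he]
    exact rho_pos hρ (ne_of_mem_of_not_mem ha hiD).symm
  have hk1 : ∀ v ∈ S, ∀ w ∈ S, |h v - h w| ≤ dist v w := by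
    intro v hv w hw
    obtain ⟨a, ha, rfl, hea⟩ := hSval v hv
    obtain ⟨b, hb, rfl, heb⟩ := hSval w hw
    rw [hea, heb, hG a ha b hb]
    exact rho_abs hρ i a b
  have hk2 : ∀ v ∈ S, ∀ w ∈ S, dist v w ≤ h v + h w := by
    intro v hv w hw
    obtain ⟨a, ha, rfl, hea⟩ := hSval v hv
    obtain ⟨b, hb, rfl, heb⟩ := hSval w hw
    rw [hea, heb, hG a ha b hb]
    exact rho_sum hρ i a b
  obtain ⟨p, hp⟩ := urysohn_one_point hU S hSfin h hpos hk1 hk2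
  refine ⟨Function.update φ i p, fun a ha => Function.update_of_ne (ne_of_mem_of_not_mem ha hiD) _ _, ?_⟩
  intro a ha b hb
  rcases Finset.mem_insert.1 ha with rfl | haD <;> rcases Finset.mem_insert.1 hb with rfl | hbD
  · rw [dist_self, rho_self hρ]
  · rw [Function.update_self, Function.update_of_ne (ne_of_mem_of_not_mem hbD hiD)]
    rw [hp (φ b) (hmemS b hbD), hval b hbD]
  · rw [Function.update_self, Function.update_of_ne (ne_of_mem_of_not_mem haD hiD)]
    rw [dist_comm, hp (φ a) (hmemS a haD), hval a haD, hρ.2.2.1]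
  · rw [Function.update_of_ne (ne_of_mem_of_not_mem haD hiD),
      Function.update_of_ne (ne_of_mem_of_not_mem hbD hiD)]
    exact hG a haD b hbD

theorem back_step {U : Type} [MetricSpace U] (hU : IsUrysohn U)
    (hρ : ρ ∈ MetricsOn ℤ)
    (hK2 : ∀ A : Finset ℤ, A.Nonempty → ∀ ε : ℝ, 0 < ε → ∀ r : ℤ → ℝ,
      (∀ x ∈ A, ∃ q : ℚ, 0 < q ∧ r x = (q : ℝ)) →
      (∀ x ∈ A, ∀ y ∈ A, |r x - r y| ≤ ρ (x, y) ∧ ρ (x, y) ≤ r x + r y) →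
      ∃ i : ℤ, i ∉ A ∧ ∀ x ∈ A, |ρ (i, x) - r x| < ε)
    {D : Finset ℤ} (hD : D.Nonempty) {φ : ℤ → U} (hG : GoodMap ρ D φ)
    (u : U) (ε : ℝ) (hε : 0 < ε) :
    ∃ i : ℤ, i ∉ D ∧ ∃ φ' : ℤ → U, (∀ a ∈ D, φ' a = φ a) ∧
      GoodMap ρ (insert i D) φ' ∧ dist u (φ' i) ≤ ε := by
  classical
  obtain ⟨ε₀, hε₀⟩ : ∃ e : ℝ, e = ε / 2 := ⟨_, rfl⟩
  have hε₀pos : 0 < ε₀ := by rw [hε₀]; positivity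
  set s : ℤ → ℝ := fun a => dist u (φ a) with hs
  have hs0 : ∀ a ∈ D, 0 ≤ s a := fun a _ => dist_nonneg
  have h1 : ∀ a ∈ D, ∀ b ∈ D, |s a - s b| ≤ ρ (a, b) := by
    intro a ha b hb
    rw [← hG a ha b hb]
    have habd := abs_dist_sub_le (φ a) (φ b) u
    simpa [hs, dist_comm] using habd
  have h2 : ∀ a ∈ D, ∀ b ∈ D, ρ (a, b) ≤ s a + s b := by
    intro a ha b hb
    rw [← hG a ha b hb]
    calc dist (φ a) (φ b) ≤ dist (φ a) u + dist u (φ b) := dist_triangle _ _ _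
      _ = s a + s b := by rw [dist_comm (φ a) u]
  obtain ⟨q, hqrat, hqkat, hqbd⟩ := rational_approx hρ D hD s hs0 h1 h2 ε₀ hε₀pos
  obtain ⟨i, hiD, hi⟩ := hK2 D hD (ε₀ / 16) (by positivity) q hqrat hqkat
  have hlow : ∀ a ∈ D, s a + ε₀ / 16 ≤ ρ (i, a) := by
    intro a ha
    have hb := (hqbd a ha).1
    have hab := abs_lt.1 (hi a ha)
    rw [hε₀] at hb hab ⊢
    linarith [hab.1, hab.2, hb]
  have hhigh : ∀ a ∈ D, ρ (i, a) ≤ s a + 2 * ε₀ := by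
    intro a ha
    have hb := (hqbd a ha).2
    have hab := abs_lt.1 (hi a ha)
    linarith [hab.2]
  obtain ⟨t, ht⟩ : ∃ t : ℝ, t = D.sup' hD (fun a => ρ (i, a) - s a) := ⟨_, rfl⟩
  have htge : ∀ a ∈ D, ρ (i, a) - s a ≤ t := fun a ha => by
    rw [ht]; exact Finset.le_sup' (fun a => ρ (i, a) - s a) ha
  have htpos : 0 < t := by
    obtain ⟨a₀, ha₀⟩ := hD
    have := htge a₀ ha₀
    have := hlow a₀ ha₀
    linarith
  have htle : ∀ a ∈ D, t ≤ ρ (i, a) + s a := by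
    intro a ha
    rw [ht]
    apply Finset.sup'_le
    intro b hb
    have htri := hρ.2.2.2 i a b
    have := h2 a ha b hb
    linarith
  have ht2 : t ≤ 2 * ε₀ := by
    rw [ht]
    apply Finset.sup'_le
    intro b hb
    have := hhigh b hb
    linarith
  set S : Set U := insert u (φ '' (↑D : Set ℤ)) with hS
  have hSfin : S.Finite := ((D.finite_toSet).image φ).insert u
  set h : U → ℝ := fun v => if hv : ∃ a, a ∈ D ∧ φ a = v then ρ (i, hv.choose) else t with hh
  have hval : ∀ a ∈ D, h (φ a) = ρ (i, a) := by
    intro a ha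
    have hex : ∃ a', a' ∈ D ∧ φ a' = φ a := ⟨a, ha, rfl⟩
    rw [hh]
    simp only [dif_pos hex]
    have hsp := hex.choose_spec
    rw [goodMap_inj hρ hG _ hsp.1 _ ha hsp.2]
  -- every element of S is either a φ-point or equals u with no φ-preimage
  have hScases : ∀ v ∈ S, (∃ a, a ∈ D ∧ φ a = v ∧ h v = ρ (i, a)) ∨
      (v = u ∧ h v = t ∧ ¬ ∃ a, a ∈ D ∧ φ a = v) := by
    intro v hv
    by_cases hex : ∃ a, a ∈ D ∧ φ a = v
    · left
      obtain ⟨a, ha, hav⟩ := hex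
      refine ⟨a, ha, hav, ?_⟩
      rw [← hav]
      exact hval a ha
    · right
      rcases Set.mem_insert_iff.1 hv with rfl | hmem
      · refine ⟨rfl, ?_, hex⟩
        rw [hh]
        simp only [dif_neg hex]
      · obtain ⟨a, ha, hav⟩ := hmem
        exact absurd ⟨a, Finset.mem_coe.1 ha, hav⟩ hex
  have hpos : ∀ v ∈ S, 0 < h v := by
    intro v hv
    rcases hScases v hv with ⟨a, ha, _, he⟩ | ⟨_, he, _⟩
    · rw [he]; exact rho_pos hρ (ne_of_mem_of_not_mem ha hiD).symm
    · rw [he]; exact htpos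
  have hk1 : ∀ v ∈ S, ∀ w ∈ S, |h v - h w| ≤ dist v w := by
    intro v hv w hw
    rcases hScases v hv with ⟨a, ha, hav, hea⟩ | ⟨hvu, hea, hnea⟩ <;>
      rcases hScases w hw with ⟨b, hb, hbw, heb⟩ | ⟨hwu, heb, hneb⟩
    · rw [hea, heb, ← hav, ← hbw, hG a ha b hb]
      exact rho_abs hρ i a b
    · rw [hea, heb, ← hav, hwu, dist_comm]
      have hd : dist u (φ a) = s a := rfl
      rw [hd, abs_sub_le_iff]
      exact ⟨by linarith [htge a ha, htle a ha], by linarith [htge a ha, htle a ha]⟩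
    · rw [hea, heb, ← hbw, hvu]
      have hd : dist u (φ b) = s b := rfl
      rw [hd, abs_sub_le_iff]
      exact ⟨by linarith [htge b hb, htle b hb], by linarith [htge b hb, htle b hb]⟩
    · rw [hea, heb]
      simp [dist_nonneg]
  have hk2 : ∀ v ∈ S, ∀ w ∈ S, dist v w ≤ h v + h w := by
    intro v hv w hw
    rcases hScases v hv with ⟨a, ha, hav, hea⟩ | ⟨hvu, hea, hnea⟩ <;>
      rcases hScases w hw with ⟨b, hb, hbw, heb⟩ | ⟨hwu, heb, hneb⟩
    · rw [hea, heb, ← hav, ← hbw, hG a ha b hb]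
      exact rho_sum hρ i a b
    · rw [hea, heb, ← hav, hwu, dist_comm]
      have hd : dist u (φ a) = s a := rfl
      rw [hd]
      linarith [hlow a ha, htpos, hε₀pos]
    · rw [hea, heb, ← hbw, hvu]
      have hd : dist u (φ b) = s b := rfl
      rw [hd]
      linarith [hlow b hb, htpos, hε₀pos]
    · rw [hea, heb, hvu, hwu, dist_self]
      linarith
  obtain ⟨p, hp⟩ := urysohn_one_point hU S hSfin h hpos hk1 hk2
  have hmemS : ∀ a ∈ D, φ a ∈ S := fun a ha =>
    Set.mem_insert_of_mem u (Set.mem_image_of_mem φ (Finset.mem_coe.2 ha))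
  refine ⟨i, hiD, Function.update φ i p,
    fun a ha => Function.update_of_ne (ne_of_mem_of_not_mem ha hiD) _ _, ?_, ?_⟩
  · intro a ha b hb
    rcases Finset.mem_insert.1 ha with rfl | haD <;> rcases Finset.mem_insert.1 hb with rfl | hbD
    · rw [dist_self, rho_self hρ]
    · rw [Function.update_self, Function.update_of_ne (ne_of_mem_of_not_mem hbD hiD)]
      rw [hp (φ b) (hmemS b hbD), hval b hbD]
    · rw [Function.update_self, Function.update_of_ne (ne_of_mem_of_not_mem haD hiD)]
      rw [dist_comm, hp (φ a) (hmemS a haD), hval a haD, hρ.2.2.1]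
    · rw [Function.update_of_ne (ne_of_mem_of_not_mem haD hiD),
        Function.update_of_ne (ne_of_mem_of_not_mem hbD hiD)]
      exact hG a haD b hbD
  · rw [Function.update_self, dist_comm]
    have huS : u ∈ S := Set.mem_insert u _
    rw [hp u huS]
    rcases hScases u huS with ⟨a, ha, hau, hea⟩ | ⟨_, hea, _⟩
    · rw [hea]
      have hsa : s a = 0 := by rw [hs]; simp [hau]
      have := hhigh a ha
      linarith [this, hsa]
    · rw [hea]
      linarith [ht2]

end UryAux

/-- **Lemma.** If `d ∈ ℳ` and `ρ ∈ ℳ_ℤ` is a Katetov extension of `d`, then the metric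
completion of `(ℤ, ρ)` is isometrically isomorphic to the Urysohn space `(𝕌, δ)` (the unique
universal and ultrahomogeneous Polish metric space): equivalently, `(ℤ, ρ)` admits a
distance-preserving map onto a dense subset of `𝕌`. -/

theorem completion_katetovExt_isUrysohn (U : Type) [MetricSpace U] (hU : IsUrysohn U)
    (d : (ℕ × ℕ) → ℝ) (hd : d ∈ MetricsOn ℕ)
    (ρ : (ℤ × ℤ) → ℝ) (hρ : ρ ∈ MetricsOn ℤ) (hK : IsKatetovExt d ρ) :
    ∃ f : ℤ → U, (∀ n m : ℤ, dist (f n) (f m) = ρ (n, m)) ∧ DenseRange f := by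
  classical
  obtain ⟨p₀, -⟩ := UryAux.urysohn_one_point hU ∅ Set.finite_empty (fun _ => 1)
      (by simp) (by simp) (by simp)
  haveI : Nonempty U := ⟨p₀⟩
  haveI : SeparableSpace U := hU.2.1
  obtain ⟨v, hv⟩ := TopologicalSpace.exists_dense_seq U
  set z : ℕ ≃ ℤ := (Denumerable.eqv ℤ).symm with hz
  have hGood0 : UryAux.GoodMap ρ {0} (fun _ => p₀) := by
    intro a ha b hb
    simp only [Finset.mem_singleton] at ha hb
    subst ha; subst hb
    rw [dist_self]
    exact (UryAux.rho_self hρ 0).symm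
  have hstep : ∀ (st : {p : Finset ℤ × (ℤ → U) // UryAux.GoodMap ρ p.1 p.2 ∧ p.1.Nonempty})
      (k : ℕ), ∃ st' : {p : Finset ℤ × (ℤ → U) // UryAux.GoodMap ρ p.1 p.2 ∧ p.1.Nonempty},
      st.1.1 ⊆ st'.1.1 ∧ z k ∈ st'.1.1 ∧ (∀ a ∈ st.1.1, st'.1.2 a = st.1.2 a) ∧
      ∃ j ∈ st'.1.1, dist (v (Nat.unpair k).1) (st'.1.2 j) ≤ 1 / ((Nat.unpair k).2 + 1) := by
    rintro ⟨⟨D, φ⟩, hG, hD⟩ k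
    obtain ⟨φ₁, hφ₁, hG₁⟩ := UryAux.extend_point hU hρ hG (z k)
    have hD₁ : (insert (z k) D).Nonempty := Finset.insert_nonempty _ _
    have hepos : (0:ℝ) < 1 / ((Nat.unpair k).2 + 1) := by positivity
    obtain ⟨i, hiD, φ₂, hφ₂, hG₂, hdist⟩ :=
      UryAux.back_step hU hρ hK.2 hD₁ hG₁ (v (Nat.unpair k).1) _ hepos
    refine ⟨⟨(insert i (insert (z k) D), φ₂), hG₂, Finset.insert_nonempty _ _⟩, ?_, ?_, ?_, ?_⟩
    · exact (Finset.subset_insert _ _).trans (Finset.subset_insert _ _)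
    · exact Finset.mem_insert_of_mem (Finset.mem_insert_self _ _)
    · intro a ha
      exact (hφ₂ a (Finset.mem_insert_of_mem ha)).trans (hφ₁ a ha)
    · exact ⟨i, Finset.mem_insert_self _ _, hdist⟩
  choose nxt hnxt using hstep
  set st₀ : {p : Finset ℤ × (ℤ → U) // UryAux.GoodMap ρ p.1 p.2 ∧ p.1.Nonempty} :=
    ⟨({0}, fun _ => p₀), hGood0, ⟨0, Finset.mem_singleton_self 0⟩⟩ with hst₀
  set F : ℕ → {p : Finset ℤ × (ℤ → U) // UryAux.GoodMap ρ p.1 p.2 ∧ p.1.Nonempty} :=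
    fun k => Nat.rec st₀ (fun k s => nxt s k) k with hF
  have hFs : ∀ k, F (k+1) = nxt (F k) k := fun k => rfl
  have hmono : ∀ k m, k ≤ m → (F k).1.1 ⊆ (F m).1.1 := by
    intro k m hkm
    induction m, hkm using Nat.le_induction with
    | base => exact subset_rfl
    | succ m hkm ih =>
        refine ih.trans ?_
        rw [hFs m]
        exact (hnxt (F m) m).1
  have hagree : ∀ k m, k ≤ m → ∀ a ∈ (F k).1.1, (F m).1.2 a = (F k).1.2 a := by
    intro k m hkm
    induction m, hkm using Nat.le_induction with
    | base => intro a ha; rfl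
    | succ m hkm ih =>
        intro a ha
        have h1 : (F (m+1)).1.2 a = (F m).1.2 a := by
          rw [hFs m]
          exact (hnxt (F m) m).2.2.1 a (hmono k m hkm ha)
        rw [h1, ih a ha]
  have himem : ∀ i : ℤ, i ∈ (F (z.symm i + 1)).1.1 := by
    intro i
    have h1 := (hnxt (F (z.symm i)) (z.symm i)).2.1
    rw [← hFs (z.symm i)] at h1
    rwa [Equiv.apply_symm_apply] at h1
  set f : ℤ → U := fun i => (F (z.symm i + 1)).1.2 i with hf
  have hfF : ∀ k, ∀ i ∈ (F k).1.1, f i = (F k).1.2 i := by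
    intro k i hi
    have h1 : (F (max k (z.symm i + 1))).1.2 i = (F (z.symm i + 1)).1.2 i :=
      hagree _ _ (le_max_right _ _) i (himem i)
    have h2 : (F (max k (z.symm i + 1))).1.2 i = (F k).1.2 i :=
      hagree _ _ (le_max_left _ _) i hi
    rw [hf]
    dsimp only
    rw [← h1, h2]
  refine ⟨f, ?_, ?_⟩
  · intro n m
    have hn : n ∈ (F (max (z.symm n + 1) (z.symm m + 1))).1.1 :=
      hmono _ _ (le_max_left _ _) (himem n)
    have hm : m ∈ (F (max (z.symm n + 1) (z.symm m + 1))).1.1 :=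
      hmono _ _ (le_max_right _ _) (himem m)
    rw [hfF _ n hn, hfF _ m hm]
    exact (F (max (z.symm n + 1) (z.symm m + 1))).2.1 n hn m hm
  · rw [Metric.denseRange_iff]
    intro x r hr
    obtain ⟨n, hn⟩ := Metric.denseRange_iff.1 hv x (r/3) (by linarith)
    obtain ⟨m, hm⟩ := exists_nat_one_div_lt (show (0:ℝ) < r/3 by linarith)
    obtain ⟨j, hj, hdist⟩ := (hnxt (F (Nat.pair n m)) (Nat.pair n m)).2.2.2
    rw [← hFs (Nat.pair n m)] at hj hdist
    have hjf : f j = (F (Nat.pair n m + 1)).1.2 j := hfF (Nat.pair n m + 1) j hj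
    rw [Nat.unpair_pair] at hdist
    refine ⟨j, ?_⟩
    have hb : dist (v n) (f j) ≤ 1/((m:ℝ)+1) := by
      rw [hjf]
      exact hdist
    calc dist x (f j) ≤ dist x (v n) + dist (v n) (f j) := dist_triangle _ _ _
      _ < r/3 + r/3 := by
          refine add_lt_add_of_lt_of_le hn (hb.trans hm.le)
      _ < r := by linarith
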